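/- With the notation of the context, let λ : G → ℂˣ be a group homomorphism whose kernel contains the subgroup D ⋊ F₀, and let χ be an irreducible complex character of G such that χ(z) ≠ χ(1) (where z is viewed as a central element of G). Then λ·χ = χ, i.e. the product character g ↦ λ(g)χ(g) equals χ. -/

import Mathlib

/-- A function `χ : G → ℂ` is an irreducible (complex) character of `G` if it is the
character of some irreducible (i.e. simple) finite-dimensional complex representation
of `G`. -/
def IsIrredCharacter {G : Type} [Group G] (χ : G → ℂ) : Prop :=
  ∃ V : FDRep ℂ G, CategoryTheory.Simple V ∧ ∀ g : G, V.character g = χ g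

open CategoryTheory

lemma schur_scalar {G : Type} [Group G] (V : FDRep ℂ G) [Simple V] (c : G)
    (hc : ∀ x : G, c * x = x * c) : ∃ ζ : ℂ, V.ρ c = ζ • LinearMap.id := by
  have hmul : ∀ x : G, V.ρ c * V.ρ x = V.ρ x * V.ρ c := by
    intro x; rw [← map_mul, ← map_mul, hc]
  let f : V ⟶ V := Action.Hom.mk (FGModuleCat.ofHom (V.ρ c)) (by
    intro x
    ext v
    change (V.ρ c) ((V.ρ x) v) = (V.ρ x) ((V.ρ c) v)
    simpa [Module.End.mul_apply] using congrArg (fun t => t v) (hmul x))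
  obtain ⟨ζ, hζ⟩ := CategoryTheory.endomorphism_simple_eq_smul_id ℂ f
  refine ⟨ζ, ?_⟩
  have h1 := congrArg Action.Hom.hom hζ
  ext v
  have h2 : ((ζ • 𝟙 V : V ⟶ V)).hom v = f.hom v := congrArg (fun t => t v) h1
  have h3 : ((ζ • 𝟙 V : V ⟶ V)).hom v = ζ • v := by
    rw [Action.smul_hom]
    simp
    rfl
  simp only [LinearMap.smul_apply, LinearMap.id_apply]
  exact (h3.symm.trans h2).symm

lemma char_central {G : Type} [Group G] (V : FDRep ℂ G) [Simple V] (c : G)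
    (hc : ∀ x : G, c * x = x * c) :
    ∃ ζ : ℂ, (∀ (m : ℕ) (x : G), V.character (c ^ m * x) = ζ ^ m * V.character x) ∧
      (V.character 1 ≠ 0 → ∀ m : ℕ, c ^ m = 1 → ζ ^ m = 1) := by
  obtain ⟨ζ, hζ⟩ := schur_scalar V c hc
  have hpow : ∀ m : ℕ, V.ρ (c ^ m) = ζ ^ m • LinearMap.id := by
    intro m
    rw [map_pow, hζ, smul_pow]
    congr 1
    exact Module.End.id_pow m
  refine ⟨ζ, ?_, ?_⟩
  · intro m x
    have : V.ρ (c ^ m * x) = ζ ^ m • V.ρ x := by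
      rw [map_mul, hpow m]
      ext w
      simp [Module.End.mul_apply]
    simp [FDRep.character, this, map_smul]
  · intro hfin m hm
    have hnt : Nontrivial V := by
      by_contra hns
      have : Subsingleton V := not_nontrivial_iff_subsingleton.mp hns
      have : Module.finrank ℂ V = 0 := Module.finrank_zero_of_subsingleton
      rw [FDRep.char_one, this] at hfin
      simp at hfin
    obtain ⟨v, hv⟩ := exists_ne (0 : V)
    have h1 := hpow m
    rw [hm, map_one] at h1
    have h2 : ζ ^ m • v = v := by
      have := congrArg (fun t => t v) h1.symm
      simpa using this
    by_contra hne
    have : (ζ ^ m - 1) • v = 0 := by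
      rw [sub_smul, one_smul]
      rw [h2]
      simp
    rcases smul_eq_zero.mp this with h | h
    · exact hne (by linear_combination h)
    · exact hv h


section GroupAux
variable {E : Type} [Group E] {ℓ : ℕ} {z g h : E}

/-- powers of a central element are central -/
lemma aux_zpowcent (hzcent : ∀ e : E, z * e = e * z) (m : ℕ) (e : E) :
    z ^ m * e = e * z ^ m := by
  induction m with
  | zero => simp
  | succ k ih => rw [pow_succ, mul_assoc, hzcent, ← mul_assoc, ih, mul_assoc]

lemma aux_zinvcent (hzcent : ∀ e : E, z * e = e * z) (e : E) :
    z⁻¹ * e = e * z⁻¹ := by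
  have := hzcent e
  calc z⁻¹ * e = z⁻¹ * e * z * z⁻¹ := by group
    _ = z⁻¹ * (z * e) * z⁻¹ := by rw [mul_assoc z⁻¹ e z, ← hzcent]
    _ = e * z⁻¹ := by group

lemma aux_hgm (hzcent : ∀ e : E, z * e = e * z) (hrel : h * g * h⁻¹ = g * z) (m : ℕ) :
    h * g ^ m * h⁻¹ = g ^ m * z ^ m := by
  induction m with
  | zero => simp
  | succ k ih =>
    have : h * g ^ (k + 1) * h⁻¹ = (h * g ^ k * h⁻¹) * (h * g * h⁻¹) := by group
    rw [this, ih, hrel, pow_succ, pow_succ]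
    calc g ^ k * z ^ k * (g * z) = g ^ k * (z ^ k * g) * z := by group
      _ = g ^ k * (g * z ^ k) * z := by rw [aux_zpowcent hzcent]
      _ = g ^ k * g * (z ^ k * z) := by group

/-- `g⁻¹ h g = z h` -/
lemma aux_ginvhg (hzcent : ∀ e : E, z * e = e * z) (hrel : h * g * h⁻¹ = g * z) :
    g⁻¹ * h * g = z * h := by
  have h1 : h * g = g * z * h := by
    have := hrel
    calc h * g = h * g * h⁻¹ * h := by group
      _ = g * z * h := by rw [hrel]
  calc g⁻¹ * h * g = g⁻¹ * (h * g) := by group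
    _ = g⁻¹ * (g * z * h) := by rw [h1]
    _ = z * h := by group

/-- `g h g⁻¹ = z⁻¹ h` -/
lemma aux_conj_central (hzcent : ∀ e : E, z * e = e * z) (e : E) : e * z * e⁻¹ = z := by
  rw [← hzcent]; group

lemma aux_ghginv (hzcent : ∀ e : E, z * e = e * z) (hrel : h * g * h⁻¹ = g * z) :
    g * h * g⁻¹ = z⁻¹ * h := by
  have h1 := aux_ginvhg hzcent hrel
  have h2 : g * (z * h) * g⁻¹ = h := by rw [← h1]; group
  have h3 : z * (g * h * g⁻¹) = h := by
    calc z * (g * h * g⁻¹) = (z * g) * h * g⁻¹ := by group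
      _ = (g * z) * h * g⁻¹ := by rw [hzcent]
      _ = g * (z * h) * g⁻¹ := by group
      _ = h := h2
  calc g * h * g⁻¹ = z⁻¹ * (z * (g * h * g⁻¹)) := by group
    _ = z⁻¹ * h := by rw [h3]

lemma aux_normal (hzcent : ∀ e : E, z * e = e * z) (hrel : h * g * h⁻¹ = g * z)
    (hgen : Subgroup.closure {z, g, h} = (⊤ : Subgroup E)) :
    (Subgroup.closure {z, g ^ ℓ, h}).Normal := by
  set F₀ := Subgroup.closure {z, g ^ ℓ, h} with hF₀
  have hzF : z ∈ F₀ := Subgroup.subset_closure (by simp)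
  have hglF : g ^ ℓ ∈ F₀ := Subgroup.subset_closure (by simp)
  have hhF : h ∈ F₀ := Subgroup.subset_closure (by simp)
  have keyg : ∀ y ∈ F₀, g * y * g⁻¹ ∈ F₀ := by
    intro y hy
    induction hy using Subgroup.closure_induction with
    | mem x hx =>
      rcases hx with rfl | rfl | rfl
      · rw [aux_conj_central hzcent g]
        exact hzF
      · rw [show g * g ^ ℓ * g⁻¹ = g ^ ℓ from by group]
        exact hglF
      · rw [aux_ghginv hzcent hrel]
        exact F₀.mul_mem (F₀.inv_mem hzF) hhF
    | one => simpa using F₀.one_mem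
    | mul a b _ _ ha hb =>
      rw [show g * (a * b) * g⁻¹ = (g * a * g⁻¹) * (g * b * g⁻¹) from by group]
      exact F₀.mul_mem ha hb
    | inv a _ ha =>
      rw [show g * a⁻¹ * g⁻¹ = (g * a * g⁻¹)⁻¹ from by group]
      exact F₀.inv_mem ha
  have keyginv : ∀ y ∈ F₀, g⁻¹ * y * g ∈ F₀ := by
    intro y hy
    induction hy using Subgroup.closure_induction with
    | mem x hx =>
      rcases hx with rfl | rfl | rfl
      · rw [show g⁻¹ * x * g = g⁻¹ * x * g⁻¹⁻¹ from by group, aux_conj_central hzcent g⁻¹]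
        exact hzF
      · rw [show g⁻¹ * g ^ ℓ * g = g ^ ℓ from by group]
        exact hglF
      · rw [aux_ginvhg hzcent hrel]
        exact F₀.mul_mem hzF hhF
    | one => simpa using F₀.one_mem
    | mul a b _ _ ha hb =>
      rw [show g⁻¹ * (a * b) * g = (g⁻¹ * a * g) * (g⁻¹ * b * g) from by group]
      exact F₀.mul_mem ha hb
    | inv a _ ha =>
      rw [show g⁻¹ * a⁻¹ * g = (g⁻¹ * a * g)⁻¹ from by group]
      exact F₀.inv_mem ha
  rw [← Subgroup.normalizer_eq_top_iff]
  rw [eq_top_iff, ← hgen]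
  rw [Subgroup.closure_le]
  rintro x (rfl | rfl | rfl)
  · refine Subgroup.mem_normalizer_iff.mpr fun y => ?_
    have hxy : x * y * x⁻¹ = y := by rw [hzcent]; group
    rw [hxy]
  · refine Subgroup.mem_normalizer_iff.mpr fun y => ?_
    constructor
    · exact keyg y
    · intro hy
      have := keyginv _ hy
      rwa [show x⁻¹ * (x * y * x⁻¹) * x = y from by group] at this
  · refine Subgroup.mem_normalizer_iff.mpr fun y => ?_
    constructor
    · intro hy
      exact F₀.mul_mem (F₀.mul_mem hhF hy) (F₀.inv_mem hhF)
    · intro hy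
      have := F₀.mul_mem (F₀.mul_mem (F₀.inv_mem hhF) hy) hhF
      rwa [show x⁻¹ * (x * y * x⁻¹) * x = y from by group] at this


lemma aux_decomp (hzcent : ∀ e : E, z * e = e * z) (hrel : h * g * h⁻¹ = g * z)
    (hgen : Subgroup.closure {z, g, h} = (⊤ : Subgroup E)) (e : E) :
    ∃ (j : ℤ) (f : E), f ∈ Subgroup.closure {z, g ^ ℓ, h} ∧ e = g ^ j * f := by
  set F₀ := Subgroup.closure {z, g ^ ℓ, h} with hF₀
  haveI : F₀.Normal := aux_normal hzcent hrel hgen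
  have hzF : z ∈ F₀ := Subgroup.subset_closure (by simp)
  have hhF : h ∈ F₀ := Subgroup.subset_closure (by simp)
  let mq := QuotientGroup.mk' F₀
  have hsub : (⊤ : Subgroup E) ≤ Subgroup.comap mq (Subgroup.zpowers (mq g)) := by
    rw [← hgen, Subgroup.closure_le]
    rintro x (rfl | rfl | rfl)
    · show mq x ∈ Subgroup.zpowers (mq g)
      have : mq x = 1 := (QuotientGroup.eq_one_iff x).mpr hzF
      rw [this]; exact Subgroup.one_mem _
    · exact Subgroup.mem_zpowers _
    · show mq x ∈ Subgroup.zpowers (mq g)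
      have : mq x = 1 := (QuotientGroup.eq_one_iff x).mpr hhF
      rw [this]; exact Subgroup.one_mem _
  have he : mq e ∈ Subgroup.zpowers (mq g) := hsub (Subgroup.mem_top e)
  obtain ⟨j, hj⟩ := he
  refine ⟨j, (g ^ j)⁻¹ * e, ?_, by group⟩
  have h1 : mq (g ^ j) = mq e := by rw [map_zpow]; exact hj
  have h2 : mq ((g ^ j)⁻¹ * e) = 1 := by
    rw [map_mul, map_inv, h1]
    group
  exact (QuotientGroup.eq_one_iff _).mp h2

lemma aux_master (hℓ : ℓ.Prime) (hzcent : ∀ e : E, z * e = e * z)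
    (hrel : h * g * h⁻¹ = g * z)
    (hgen : Subgroup.closure {z, g, h} = (⊤ : Subgroup E))
    (T : Subgroup E) (hT : Subgroup.closure {z, g ^ ℓ, h} ≤ T) (hgT : g ∉ T) :
    T ≤ Subgroup.closure {z, g ^ ℓ, h} := by
  intro e he
  obtain ⟨j, f, hf, rfl⟩ := aux_decomp hzcent hrel hgen e
  have hglF : g ^ ℓ ∈ Subgroup.closure {z, g ^ ℓ, h} := Subgroup.subset_closure (by simp)
  have hgj : g ^ j ∈ T := by
    have := T.mul_mem he (T.inv_mem (hT hf))
    simpa using this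
  by_cases hdvd : (ℓ : ℤ) ∣ j
  · obtain ⟨t, rfl⟩ := hdvd
    have : g ^ ((ℓ : ℤ) * t) = (g ^ ℓ) ^ t := by
      rw [zpow_mul, zpow_natCast]
    rw [this]
    exact Subgroup.mul_mem _ (Subgroup.zpow_mem _ hglF t) hf
  · exfalso
    apply hgT
    have hcop : IsCoprime (ℓ : ℤ) j := by
      rw [Int.isCoprime_iff_gcd_eq_one, Int.gcd]
      simp only [Int.natAbs_natCast]
      refine hℓ.coprime_iff_not_dvd.mpr fun hd => hdvd ?_
      exact Int.natCast_dvd.mpr hd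
    obtain ⟨u, v, huv⟩ := hcop
    have : g = (g ^ (ℓ : ℤ)) ^ u * (g ^ j) ^ v := by
      rw [← zpow_mul, ← zpow_mul, ← zpow_add]
      have huv2 : (ℓ : ℤ) * u + j * v = 1 := by linear_combination huv
      rw [huv2, zpow_one]
    rw [this]
    exact T.mul_mem (Subgroup.zpow_mem _ (by simpa using hT hglF) u)
      (Subgroup.zpow_mem _ hgj v)


/-- every element of `E` satisfies `h e h⁻¹ = e z^m` for some `m : ℕ` -/
lemma aux_hconj (hℓ : ℓ.Prime) (hzord : orderOf z = ℓ) (hzcent : ∀ e : E, z * e = e * z)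
    (hrel : h * g * h⁻¹ = g * z)
    (hgen : Subgroup.closure {z, g, h} = (⊤ : Subgroup E)) (e : E) :
    ∃ m : ℕ, h * e * h⁻¹ = e * z ^ m := by
  have hzl : z ^ ℓ = 1 := by rw [← hzord]; exact pow_orderOf_eq_one z
  let S : Subgroup E :=
    { carrier := {e : E | ∃ m : ℕ, h * e * h⁻¹ = e * z ^ m}
      one_mem' := ⟨0, by group⟩
      mul_mem' := by
        rintro a b ⟨m₁, h₁⟩ ⟨m₂, h₂⟩
        refine ⟨m₁ + m₂, ?_⟩
        calc h * (a * b) * h⁻¹ = (h * a * h⁻¹) * (h * b * h⁻¹) := by group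
          _ = a * z ^ m₁ * (b * z ^ m₂) := by rw [h₁, h₂]
          _ = a * (z ^ m₁ * b) * z ^ m₂ := by group
          _ = a * (b * z ^ m₁) * z ^ m₂ := by rw [aux_zpowcent hzcent]
          _ = a * b * z ^ (m₁ + m₂) := by rw [pow_add]; group
      inv_mem' := by
        rintro a ⟨m, hm⟩
        refine ⟨m * (ℓ - 1), ?_⟩
        have hzm : (z ^ m) ^ ℓ = 1 := by
          rw [← pow_mul, mul_comm, pow_mul, hzl, one_pow]
        have h1 : z ^ m * (z ^ m) ^ (ℓ - 1) = 1 := by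
          rw [← pow_succ', Nat.sub_add_cancel hℓ.one_le]
          exact hzm
        have hinv : (z ^ m)⁻¹ = z ^ (m * (ℓ - 1)) := by
          rw [pow_mul]
          exact inv_eq_of_mul_eq_one_right h1
        calc h * a⁻¹ * h⁻¹ = (h * a * h⁻¹)⁻¹ := by group
          _ = (a * z ^ m)⁻¹ := by rw [hm]
          _ = (z ^ m)⁻¹ * a⁻¹ := by group
          _ = a⁻¹ * (z ^ m)⁻¹ := by
              have hc : Commute (z ^ m) a⁻¹ := aux_zpowcent hzcent m a⁻¹
              exact hc.inv_left.eq
          _ = a⁻¹ * z ^ (m * (ℓ - 1)) := by rw [hinv] }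
  have : (⊤ : Subgroup E) ≤ S := by
    rw [← hgen, Subgroup.closure_le]
    rintro x (rfl | rfl | rfl)
    · exact ⟨0, by rw [← hzcent]; group⟩
    · exact ⟨1, by rw [pow_one]; exact hrel⟩
    · exact ⟨0, by group⟩
  exact this (Subgroup.mem_top e)

end GroupAux


section DiagAux
variable {𝔽 : Type} [Field 𝔽] {E : Type} [Group E]

open Multiplicative

/-- the subgroup of elements acting diagonally with scalars satisfying `P` -/
def diagSubgroup (φ : E →* MulAut (Multiplicative (𝔽 × 𝔽))) (P : 𝔽 → 𝔽 → Prop)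
    (hP1 : P 1 1) (hPmul : ∀ s₁ u₁ s₂ u₂, P s₁ u₁ → P s₂ u₂ → P (s₁ * s₂) (u₁ * u₂))
    (hPinv : ∀ s u, s ≠ 0 → u ≠ 0 → P s u → P s⁻¹ u⁻¹) : Subgroup E where
  carrier := {e : E | ∃ s u : 𝔽, s ≠ 0 ∧ u ≠ 0 ∧ P s u ∧
    ∀ d : 𝔽 × 𝔽, φ e (ofAdd d) = ofAdd (s * d.1, u * d.2)}
  one_mem' := ⟨1, 1, one_ne_zero, one_ne_zero, hP1, by intro d; simp⟩
  mul_mem' := by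
    rintro a b ⟨s₁, u₁, hs₁, hu₁, hp₁, hd₁⟩ ⟨s₂, u₂, hs₂, hu₂, hp₂, hd₂⟩
    refine ⟨s₁ * s₂, u₁ * u₂, mul_ne_zero hs₁ hs₂, mul_ne_zero hu₁ hu₂,
      hPmul _ _ _ _ hp₁ hp₂, fun d => ?_⟩
    rw [map_mul]
    show φ a (φ b (ofAdd d)) = _
    rw [hd₂ d, hd₁ (s₂ * d.1, u₂ * d.2)]
    congr 1
    simp [mul_assoc]
  inv_mem' := by
    rintro a ⟨s, u, hs, hu, hp, hd⟩
    refine ⟨s⁻¹, u⁻¹, inv_ne_zero hs, inv_ne_zero hu, hPinv _ _ hs hu hp, fun d => ?_⟩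
    rw [map_inv]
    apply (φ a).injective
    rw [show ((φ a)⁻¹ : MulAut (Multiplicative (𝔽 × 𝔽))) = (φ a).symm from rfl]
    rw [MulEquiv.apply_symm_apply, hd (s⁻¹ * d.1, u⁻¹ * d.2)]
    congr 1
    field_simp

end DiagAux


open Multiplicative SemidirectProduct in
/-- Let `ℓ ≠ p` be primes, `n` the multiplicative order of `p` mod `ℓ²`, `𝔽` the field
with `p^n` elements and `ω ∈ 𝔽` a primitive `ℓ²`-th root of unity.  Let `E` be the group
generated by `z, g, h` with `z` central of order `ℓ`, `g` of order `ℓ²`, `h` of order `ℓ`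
and `h g h⁻¹ = g z` (so `E ≅ (C_ℓ × C_{ℓ²}) ⋊ C_ℓ`, of order `ℓ⁴`).  Let `D := 𝔽 × 𝔽`
(additively) and let `E` act on `D` by: `z` trivially, `g` by multiplication by `ω` on
both coordinates, and `h` trivially on the first coordinate and by multiplication by
`ω⁻ℓ` on the second.  Let `G := D ⋊ E` and `F₀ := ⟨z, g^ℓ, h⟩ ≤ E`.  If `λ : G → ℂˣ` is a
homomorphism whose kernel contains `D ⋊ F₀`, and `χ` is an irreducible complex character
of `G` with `χ(z) ≠ χ(1)` (`z` viewed as the central element `(0, z)` of `G`), then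
`λ·χ = χ`, i.e. `λ(a)·χ(a) = χ(a)` for all `a ∈ G`. -/
theorem stmt14 (ℓ p n : ℕ) (hℓ : ℓ.Prime) (hp : p.Prime) (hℓp : ℓ ≠ p)
    (hn : 0 < n) (hnmod : p ^ n ≡ 1 [MOD ℓ ^ 2])
    (hnmin : ∀ m : ℕ, 0 < m → p ^ m ≡ 1 [MOD ℓ ^ 2] → n ≤ m)
    (𝔽 : Type) [Field 𝔽] [Fintype 𝔽] (h𝔽 : Fintype.card 𝔽 = p ^ n)
    (ω : 𝔽) (hω : IsPrimitiveRoot ω (ℓ ^ 2))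
    (E : Type) [Group E] (z g h : E)
    (hzord : orderOf z = ℓ) (hzcent : ∀ e : E, z * e = e * z)
    (hgord : orderOf g = ℓ ^ 2) (hhord : orderOf h = ℓ)
    (hrel : h * g * h⁻¹ = g * z)
    (hgen : Subgroup.closure {z, g, h} = (⊤ : Subgroup E))
    (hcard : Nat.card E = ℓ ^ 4)
    (φ : E →* MulAut (Multiplicative (𝔽 × 𝔽)))
    (hφz : ∀ d : 𝔽 × 𝔽, φ z (Multiplicative.ofAdd d) = Multiplicative.ofAdd d)
    (hφg : ∀ d : 𝔽 × 𝔽,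
      φ g (Multiplicative.ofAdd d) = Multiplicative.ofAdd (ω * d.1, ω * d.2))
    (hφh : ∀ d : 𝔽 × 𝔽,
      φ h (Multiplicative.ofAdd d) = Multiplicative.ofAdd (d.1, ω⁻¹ ^ ℓ * d.2))
    (lam : Multiplicative (𝔽 × 𝔽) ⋊[φ] E →* ℂˣ)
    (hlam : ∀ (d : 𝔽 × 𝔽) (f : E), f ∈ Subgroup.closure {z, g ^ ℓ, h} →
      lam ⟨Multiplicative.ofAdd d, f⟩ = 1)
    (χ : (Multiplicative (𝔽 × 𝔽) ⋊[φ] E) → ℂ) (hχ : IsIrredCharacter χ)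
    (hχz : χ (⟨1, z⟩ : Multiplicative (𝔽 × 𝔽) ⋊[φ] E) ≠
      χ (1 : Multiplicative (𝔽 × 𝔽) ⋊[φ] E)) :
    ∀ a : Multiplicative (𝔽 × 𝔽) ⋊[φ] E, (lam a : ℂ) * χ a = χ a := by
  classical
  intro a
  -- basic facts
  have hℓpos : 0 < ℓ := hℓ.pos
  have hz1 : z ≠ 1 := by
    intro hz
    rw [hz, orderOf_one] at hzord
    exact hℓ.one_lt.ne hzord
  have hzl : z ^ ℓ = 1 := by rw [← hzord]; exact pow_orderOf_eq_one z
  have hω0 : ω ≠ 0 := by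
    intro h0
    have h1 := hω.pow_eq_one
    rw [h0, zero_pow (by positivity)] at h1
    exact zero_ne_one h1
  have hωord : orderOf ω = ℓ ^ 2 := hω.eq_orderOf.symm
  have hωl : ω ^ ℓ ≠ 1 := by
    intro h1
    have h2 := orderOf_dvd_of_pow_eq_one h1
    rw [hωord] at h2
    have h3 := Nat.le_of_dvd hℓpos h2
    nlinarith [hℓ.two_le]
  by_cases hFa : a.right ∈ Subgroup.closure {z, g ^ ℓ, h}
  · -- easy case : `lam a = 1`
    have h1 : lam a = 1 := by
      rw [show a = (⟨Multiplicative.ofAdd (Multiplicative.toAdd a.left), a.right⟩ :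
        Multiplicative (𝔽 × 𝔽) ⋊[φ] E) from by ext <;> simp]
      exact hlam _ _ hFa
    rw [h1]
    simp
  · -- hard case : `χ a = 0`
    suffices hχ0 : χ a = 0 by rw [hχ0]; ring
    obtain ⟨V, hVsimple, hVchar⟩ := hχ
    haveI := hVsimple
    set c : Multiplicative (𝔽 × 𝔽) ⋊[φ] E := SemidirectProduct.inr z with hcdef
    have hφzpow : ∀ (m : ℕ) (x : Multiplicative (𝔽 × 𝔽)), φ (z ^ m) x = x := by
      intro m x
      induction m with
      | zero => simp
      | succ k ih =>
        rw [pow_succ, map_mul]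
        show φ (z ^ k) (φ z x) = x
        rw [show φ z x = x from by rw [← ofAdd_toAdd x, hφz], ih]
    have hφzx : ∀ x : Multiplicative (𝔽 × 𝔽), φ z x = x := by
      intro x; rw [← ofAdd_toAdd x, hφz]
    have hccent : ∀ b : Multiplicative (𝔽 × 𝔽) ⋊[φ] E, c * b = b * c := by
      intro b
      apply SemidirectProduct.ext
      · show c.left * φ c.right b.left = b.left * φ b.right c.left
        rw [hcdef]
        simp [hφzx]
      · show c.right * b.right = b.right * c.right
        rw [hcdef]
        simp [hzcent]
    obtain ⟨ζ, hζ1, hζ2⟩ := char_central V c hccent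
    have hcz : (⟨1, z⟩ : Multiplicative (𝔽 × 𝔽) ⋊[φ] E) = c := by
      rw [hcdef]; ext <;> simp
    have hχc : χ c = ζ * χ 1 := by
      have h1 := hζ1 1 1
      rw [pow_one, pow_one, mul_one] at h1
      rw [← hVchar, ← hVchar]
      exact h1
    have hχ1ne : χ 1 ≠ 0 := by
      intro h0
      exact hχz (by rw [hcz, hχc, h0, mul_zero])
    have hfin : V.character 1 ≠ 0 := by rw [hVchar 1]; exact hχ1ne
    have hcl : c ^ ℓ = 1 := by rw [hcdef, ← map_pow, hzl, map_one]
    have hζl : ζ ^ ℓ = 1 := hζ2 hfin ℓ hcl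
    have hζne1 : ζ ≠ 1 := by
      intro h1
      exact hχz (by rw [hcz, hχc, h1, one_mul])
    haveI : Fact ℓ.Prime := ⟨hℓ⟩
    have hζord : orderOf ζ = ℓ := orderOf_eq_prime hζl hζne1
    -- conjugation by `h` on `a.right`
    obtain ⟨m, hm⟩ := aux_hconj hℓ hzord hzcent hrel hgen a.right
    have hmemc : ∀ w : E, h * w = w * h → w ∈ Subgroup.centralizer {h} := by
      intro w hw
      rw [Subgroup.mem_centralizer_iff]
      intro y hy
      rw [Set.mem_singleton_iff] at hy
      rw [hy]
      exact hw
    have hglcomm : h * g ^ ℓ = g ^ ℓ * h := by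
      have h1 := aux_hgm hzcent hrel (z := z) ℓ
      rw [hzl, mul_one] at h1
      calc h * g ^ ℓ = (h * g ^ ℓ * h⁻¹) * h := by group
        _ = g ^ ℓ * h := by rw [h1]
    have hcent_le : Subgroup.closure {z, g ^ ℓ, h} ≤ Subgroup.centralizer {h} := by
      rw [Subgroup.closure_le]
      rintro x (rfl | rfl | rfl)
      · exact hmemc x (hzcent h).symm
      · exact hmemc _ hglcomm
      · exact hmemc x rfl
    have hgnc : g ∉ Subgroup.centralizer {h} := by
      intro hg
      have h1 : h * g = g * h := Subgroup.mem_centralizer_iff.mp hg h (Set.mem_singleton h)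
      have h2 : h * g * h⁻¹ = g := by rw [h1]; group
      rw [hrel] at h2
      exact hz1 (by
        have := h2
        calc z = g⁻¹ * (g * z) := by group
          _ = g⁻¹ * g := by rw [this]
          _ = 1 := by group)
    have hzm : z ^ m ≠ 1 := by
      intro h1
      apply hFa
      apply aux_master hℓ hzcent hrel hgen _ hcent_le hgnc
      apply hmemc
      rw [h1, mul_one] at hm
      calc h * a.right = (h * a.right * h⁻¹) * h := by group
        _ = a.right * h := by rw [hm]
    have hℓm : ¬ (ℓ ∣ m) := by
      intro hd
      exact hzm (orderOf_dvd_iff_pow_eq_one.mp (hzord ▸ hd))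
    have hζm : ζ ^ m ≠ 1 := by
      intro h1
      exact hℓm (hζord ▸ orderOf_dvd_of_pow_eq_one h1)
    -- diagonal action of `a.right`
    have hDgtop : ∀ e : E, e ∈ diagSubgroup φ (fun _ _ => True) trivial
        (fun _ _ _ _ _ _ => trivial) (fun _ _ _ _ _ => trivial) := by
      intro e
      have h1 : (⊤ : Subgroup E) ≤ diagSubgroup φ (fun _ _ => True) trivial
          (fun _ _ _ _ _ _ => trivial) (fun _ _ _ _ _ => trivial) := by
        rw [← hgen, Subgroup.closure_le]
        rintro x (rfl | rfl | rfl)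
        · exact ⟨1, 1, one_ne_zero, one_ne_zero, trivial, fun d => by rw [hφz]; simp⟩
        · exact ⟨ω, ω, hω0, hω0, trivial, fun d => hφg d⟩
        · exact ⟨1, ω⁻¹ ^ ℓ, one_ne_zero, pow_ne_zero _ (inv_ne_zero hω0), trivial,
            fun d => by rw [hφh]; simp⟩
      exact h1 (Subgroup.mem_top e)
    obtain ⟨s, u, hs0, hu0, -, hdiag⟩ := hDgtop a.right
    -- the subgroup `T₂` and `u ^ ℓ ≠ 1`
    have hφgm : ∀ (k : ℕ) (d : 𝔽 × 𝔽),
        φ (g ^ k) (Multiplicative.ofAdd d) = Multiplicative.ofAdd (ω ^ k * d.1, ω ^ k * d.2) := by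
      intro k
      induction k with
      | zero => intro d; simp
      | succ j ih =>
        intro d
        rw [pow_succ, map_mul]
        show φ (g ^ j) (φ g (Multiplicative.ofAdd d)) = _
        rw [hφg, ih]
        have hpr : (ω ^ j * (ω * d.1), ω ^ j * (ω * d.2))
            = (ω ^ (j + 1) * d.1, ω ^ (j + 1) * d.2) := by
          rw [Prod.mk.injEq]
          constructor <;> ring
        rw [hpr]
    have hωll : ω ⁻¹ ^ ℓ ≠ 0 := pow_ne_zero _ (inv_ne_zero hω0)
    have hll : ℓ * ℓ = ℓ ^ 2 := by ring
    have hT2 : ∀ e' : E, e' ∈ diagSubgroup φ (fun _ v => v ^ ℓ = 1) (one_pow ℓ)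
        (fun s₁ u₁ s₂ u₂ h₁ h₂ => by
          show (u₁ * u₂) ^ ℓ = 1
          have h₁' : u₁ ^ ℓ = 1 := h₁
          have h₂' : u₂ ^ ℓ = 1 := h₂
          rw [mul_pow, h₁', h₂', one_mul])
        (fun s' u' _ _ hp => by
          show u'⁻¹ ^ ℓ = 1
          have hp' : u' ^ ℓ = 1 := hp
          rw [inv_pow, hp', inv_one]) → e' ∈ Subgroup.closure {z, g ^ ℓ, h} := by
      apply aux_master hℓ hzcent hrel hgen
      · rw [Subgroup.closure_le]
        rintro x (rfl | rfl | rfl)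
        · exact ⟨1, 1, one_ne_zero, one_ne_zero, one_pow ℓ, fun d => by rw [hφz]; simp⟩
        · refine ⟨ω ^ ℓ, ω ^ ℓ, pow_ne_zero _ hω0, pow_ne_zero _ hω0, ?_, fun d => hφgm ℓ d⟩
          show (ω ^ ℓ) ^ ℓ = 1
          rw [← pow_mul, hll]
          exact hω.pow_eq_one
        · refine ⟨1, ω⁻¹ ^ ℓ, one_ne_zero, hωll, ?_, fun d => by rw [hφh]; simp⟩
          show (ω⁻¹ ^ ℓ) ^ ℓ = 1
          rw [← pow_mul, hll, inv_pow, hω.pow_eq_one, inv_one]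
      · rintro ⟨s', u', hs', hu', hul, hd⟩
        have h1 : Multiplicative.ofAdd ((ω : 𝔽) * (0 : 𝔽), ω * (1 : 𝔽))
            = Multiplicative.ofAdd (s' * (0 : 𝔽), u' * (1 : 𝔽)) := by
          rw [← hφg ((0 : 𝔽), (1 : 𝔽)), hd ((0 : 𝔽), (1 : 𝔽))]
        have h2 : ((ω : 𝔽) * (0 : 𝔽), ω * (1 : 𝔽)) = (s' * (0 : 𝔽), u' * (1 : 𝔽)) := by
          exact_mod_cast h1
        have h3 : u' = ω := by
          have := congrArg Prod.snd h2
          simpa using this.symm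
        rw [h3] at hul
        exact hωl hul
    have huℓ : u ^ ℓ ≠ 1 := by
      intro h1
      exact hFa (hT2 a.right ⟨s, u, hs0, hu0, h1, hdiag⟩)
    have hu1 : u ≠ 1 := fun h1 => huℓ (by rw [h1, one_pow])
    -- the conjugating element
    set d : 𝔽 × 𝔽 := Multiplicative.toAdd a.left with hddef
    set y : 𝔽 := d.2 * (1 - ω⁻¹ ^ ℓ) / (1 - u) with hydef
    set x : Multiplicative (𝔽 × 𝔽) ⋊[φ] E := ⟨Multiplicative.ofAdd ((0 : 𝔽), y), h⟩ with hxdef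
    have haleft : a.left = Multiplicative.ofAdd d := by rw [hddef, ofAdd_toAdd]
    have hkey : x * a * x⁻¹ = a * c ^ m := by
      have hcm : c ^ m = SemidirectProduct.inr (z ^ m) := by rw [hcdef, ← map_pow]
      rw [hcm]
      apply SemidirectProduct.ext
      · -- left components
        show (x * a).left * φ (x * a).right x⁻¹.left
          = a.left * φ a.right (SemidirectProduct.inr (z ^ m)).left
        rw [SemidirectProduct.mul_left, SemidirectProduct.mul_right,
          SemidirectProduct.inv_left, SemidirectProduct.left_inr]
        rw [show φ a.right (1 : Multiplicative (𝔽 × 𝔽)) = 1 from map_one _, mul_one]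
        have hcompose : φ (x.right * a.right) (φ x.right⁻¹ x.left⁻¹)
            = φ (x.right * a.right * x.right⁻¹) x.left⁻¹ := by
          rw [map_mul (φ) (x.right * a.right) (x.right⁻¹)]
          rfl
        rw [hcompose]
        have hxr : x.right = h := rfl
        have hconj : x.right * a.right * x.right⁻¹ = a.right * z ^ m := by rw [hxr]; exact hm
        rw [hconj, map_mul]
        have hφz2 : φ (a.right * z ^ m) x.left⁻¹ = φ a.right x.left⁻¹ := by
          rw [map_mul]
          show φ a.right (φ (z ^ m) x.left⁻¹) = φ a.right x.left⁻¹
          rw [hφzpow]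
        rw [← map_mul, hφz2]
        have hxl : x.left = Multiplicative.ofAdd ((0 : 𝔽), y) := rfl
        rw [hxl, hxr, haleft, hφh]
        rw [show (Multiplicative.ofAdd ((0 : 𝔽), y))⁻¹
          = Multiplicative.ofAdd (((0 : 𝔽), -y)) from by
            rw [← ofAdd_neg]
            congr 1
            rw [Prod.neg_mk, neg_zero]]
        rw [hdiag ((0 : 𝔽), -y)]
        rw [← ofAdd_add, ← ofAdd_add]
        apply congrArg
        rw [show d = (d.1, d.2) from rfl]
        simp only [Prod.mk_add_mk]
        rw [Prod.mk.injEq]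
        have hueq : (1 : 𝔽) - u ≠ 0 := sub_ne_zero.mpr (Ne.symm hu1)
        constructor
        · ring
        · have hy1 : y * (1 - u) = d.2 * (1 - ω⁻¹ ^ ℓ) := by
            rw [hydef, div_mul_cancel₀ _ hueq]
          linear_combination hy1
      · -- right components
        show (x * a).right * x⁻¹.right = a.right * (SemidirectProduct.inr (z ^ m)).right
        rw [SemidirectProduct.mul_right, SemidirectProduct.inv_right,
          SemidirectProduct.right_inr]
        show x.right * a.right * x.right⁻¹ = a.right * z ^ m
        exact hm
    -- put it together
    have h5 : V.character (x * a * x⁻¹) = V.character a := FDRep.char_conj V a x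
    rw [hkey] at h5
    have h6 : V.character (a * c ^ m) = V.character (c ^ m * a) :=
      FDRep.char_mul_comm V (c ^ m) a
    have h7 := hζ1 m a
    rw [h6, h7] at h5
    rw [hVchar] at h5
    -- `χ a = ζ ^ m * χ a` with `ζ ^ m ≠ 1`
    have h8 : (ζ ^ m - 1) * χ a = 0 := by
      rw [sub_mul, one_mul]
      rw [← hVchar a] at h5 ⊢
      rw [h5]
      ring
    rcases mul_eq_zero.mp h8 with h9 | h9
    · exact absurd (by linear_combination h9) hζm
    · exact h9
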